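/- Let ψ_m := φ_m ⊗ φ_m ∈ ℂ⁴ (Kronecker product) for m = 0, 1, 2, 3, and define the 4×4 Hermitian matrices L := (1/2)P(ψ₁) + P(ψ₂) + (1/2)P(ψ₃) and B := (1/2)P(ψ₀) + P(ψ₁) + (3/2)P(ψ₂) + P(ψ₃). Then L - ((3 - √2)/7)·B is positive semidefinite, and the bound is attained: there exists a vector v ∈ ℂ⁴ with (L - ((3 - √2)/7)·B)v = 0 and Bv ≠ 0. Hence the minimum bit error rate Eve induces in two-photon SARG04 by a POVM intercept-and-resend attack resending SARG04 states is (3 - √2)/7 ≈ 22.65%. -/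

import Mathlib

open Matrix Real
open scoped ComplexOrder

noncomputable section

/-- Standard basis vector `e₀` of `ℂ²`. -/
def e0 : Fin 2 → ℂ := ![1, 0]
/-- Standard basis vector `e₁` of `ℂ²`. -/
def e1 : Fin 2 → ℂ := ![0, 1]

/-- `P(v) = v v†`, the rank-one matrix associated with `v ∈ ℂ²`. -/
def P (v : Fin 2 → ℂ) : Matrix (Fin 2) (Fin 2) ℂ := vecMulVec v (star v)

/-- The rotation `R = cos(π/4)·I + sin(π/4)·(e₁e₀† - e₀e₁†)`. -/
def Rrot : Matrix (Fin 2) (Fin 2) ℂ :=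
  (Real.cos (π / 4) : ℂ) • 1 +
    (Real.sin (π / 4) : ℂ) • (vecMulVec e1 (star e0) - vecMulVec e0 (star e1))

/-- The SARG04 states `φ_m = R^{-m} φ₀` with `φ₀ = cos(π/8) e₀ + sin(π/8) e₁`,
indices effectively taken modulo 4. -/
def φ (m : ℤ) : Fin 2 → ℂ :=
  (Rrot ^ (-m)).mulVec ((Real.cos (π / 8) : ℂ) • e0 + (Real.sin (π / 8) : ℂ) • e1)
/-- Kronecker (tensor) product of two vectors in `ℂ²`, giving a vector in `ℂ² ⊗ ℂ² ≅ ℂ⁴`. -/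
def tensor (v w : Fin 2 → ℂ) : Fin 2 × Fin 2 → ℂ := fun p => v p.1 * w p.2

/-- `P₄(v) = v v†`, the rank-one `4×4` matrix associated with `v ∈ ℂ⁴`. -/
def P4 (v : Fin 2 × Fin 2 → ℂ) : Matrix (Fin 2 × Fin 2) (Fin 2 × Fin 2) ℂ :=
  vecMulVec v (star v)

/-- The two-photon SARG04 states `ψ_m = φ_m ⊗ φ_m` (indices mod 4). -/
def ψ (m : ℤ) : Fin 2 × Fin 2 → ℂ := tensor (φ m) (φ m)
/-- The matrix `L` for the two-photon SARG04 intercept-and-resend analysis. -/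
def L2 : Matrix (Fin 2 × Fin 2) (Fin 2 × Fin 2) ℂ :=
  ((1 : ℂ) / 2) • P4 (ψ 1) + P4 (ψ 2) + ((1 : ℂ) / 2) • P4 (ψ 3)

/-- The matrix `B` for the two-photon SARG04 intercept-and-resend analysis. -/
def B2 : Matrix (Fin 2 × Fin 2) (Fin 2 × Fin 2) ℂ :=
  ((1 : ℂ) / 2) • P4 (ψ 0) + P4 (ψ 1) + ((3 : ℂ) / 2) • P4 (ψ 2) + P4 (ψ 3)

private lemma h2c : (Real.sqrt 2 : ℂ) * (Real.sqrt 2 : ℂ) = 2 := by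
  rw [← Complex.ofReal_mul, Real.mul_self_sqrt (by norm_num : (0:ℝ) ≤ 2)]
  norm_num

/-- `P₄(w)` is positive semidefinite. -/
private lemma P4_posSemidef (w : Fin 2 × Fin 2 → ℂ) : (P4 w).PosSemidef := by
  rw [P4, vecMulVec_eq (Fin 1), ← conjTranspose_replicateCol]
  exact posSemidef_self_mul_conjTranspose _

private lemma smul_P4_posSemidef (c : ℝ) (hc : 0 ≤ c) (w : Fin 2 × Fin 2 → ℂ) :
    ((c : ℂ) • P4 w).PosSemidef := by
  have hcc : ((Real.sqrt c : ℝ) : ℂ) * ((Real.sqrt c : ℝ) : ℂ) = (c : ℂ) := by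
    rw [← Complex.ofReal_mul, Real.mul_self_sqrt hc]
  have key : (c : ℂ) • P4 w = P4 (((Real.sqrt c : ℝ) : ℂ) • w) := by
    ext p q
    simp only [P4, Matrix.smul_apply, vecMulVec_apply, Pi.smul_apply, Pi.star_apply,
      smul_eq_mul, star_mul', Complex.star_def, Complex.conj_ofReal]
    ring_nf
    linear_combination (-(w p * (starRingEnd ℂ) (w q))) * hcc
  rw [key]; exact P4_posSemidef _

private def S : Matrix (Fin 2) (Fin 2) ℂ :=
  !![(Real.sqrt 2 : ℂ)/2, (Real.sqrt 2 : ℂ)/2; -((Real.sqrt 2 : ℂ)/2), (Real.sqrt 2 : ℂ)/2]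

private lemma Rrot_eq :
    Rrot = !![(Real.sqrt 2 : ℂ)/2, -((Real.sqrt 2 : ℂ)/2);
              (Real.sqrt 2 : ℂ)/2, (Real.sqrt 2 : ℂ)/2] := by
  ext i j
  fin_cases i <;> fin_cases j <;>
    simp [Rrot, e0, e1, vecMulVec_apply, Matrix.one_apply, Matrix.sub_apply, Pi.star_apply,
      -Matrix.cons_vecMulVec, -Matrix.vecMulVec_cons, Real.cos_pi_div_four, Real.sin_pi_div_four] <;> push_cast <;> ring

private lemma hRS : Rrot * S = 1 := by
  rw [Rrot_eq, S]
  ext i j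
  fin_cases i <;> fin_cases j <;>
    simp [Matrix.mul_apply, Fin.sum_univ_two, Matrix.one_apply] <;>
    linear_combination (1/2 : ℂ) * h2c

private lemma hSinv : Rrot⁻¹ = S := inv_eq_right_inv hRS

private lemma hdet : IsUnit Rrot.det := by
  have h : Rrot.det = 1 := by
    rw [Rrot_eq, Matrix.det_fin_two_of]
    linear_combination (1/2 : ℂ) * h2c
  rw [h]; exact isUnit_one

private lemma phi_step (m : ℤ) : φ (m + 1) = S.mulVec (φ m) := by
  unfold φ
  rw [show -(m + 1) = (-1) + (-m) by ring, Matrix.zpow_add hdet, Matrix.zpow_neg_one,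
    hSinv, ← Matrix.mulVec_mulVec]

private lemma phi0 : φ 0 = ![(Real.cos (π/8) : ℂ), (Real.sin (π/8) : ℂ)] := by
  unfold φ
  rw [neg_zero, zpow_zero, Matrix.one_mulVec]
  funext i; fin_cases i <;> simp [e0, e1]

private lemma trig1R : Real.sqrt 2 / 2 * (Real.cos (π/8) + Real.sin (π/8)) = Real.cos (π/8) := by
  have h := Real.cos_sub (π/4) (π/8)
  rw [show π/4 - π/8 = π/8 by ring, Real.cos_pi_div_four, Real.sin_pi_div_four] at h
  linear_combination -h

private lemma trig2R : Real.sqrt 2 / 2 * (Real.cos (π/8) - Real.sin (π/8)) = Real.sin (π/8) := by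
  have h := Real.sin_sub (π/4) (π/8)
  rw [show π/4 - π/8 = π/8 by ring, Real.cos_pi_div_four, Real.sin_pi_div_four] at h
  linear_combination -h

private lemma trig1 : (Real.sqrt 2 : ℂ) / 2 * ((Real.cos (π/8) : ℂ) + (Real.sin (π/8) : ℂ))
    = (Real.cos (π/8) : ℂ) := by exact_mod_cast congrArg Complex.ofReal trig1R

private lemma trig2 : (Real.sqrt 2 : ℂ) / 2 * ((Real.cos (π/8) : ℂ) - (Real.sin (π/8) : ℂ))
    = (Real.sin (π/8) : ℂ) := by exact_mod_cast congrArg Complex.ofReal trig2R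

private lemma phi1 : φ 1 = ![(Real.cos (π/8) : ℂ), -(Real.sin (π/8) : ℂ)] := by
  have h := phi_step 0
  rw [zero_add, phi0] at h
  rw [h]
  funext i; fin_cases i <;>
    simp only [S, Matrix.mulVec, dotProduct, Fin.sum_univ_two, Matrix.of_apply,
      Matrix.cons_val', Matrix.cons_val_zero, Matrix.cons_val_one, Matrix.head_cons,
      Matrix.head_fin_const, Matrix.empty_val', Matrix.cons_val_fin_one, Fin.mk_zero, Fin.mk_one]
  · linear_combination trig1
  · linear_combination -trig2

private lemma phi2 : φ 2 = ![(Real.sin (π/8) : ℂ), -(Real.cos (π/8) : ℂ)] := by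
  have h := phi_step 1
  rw [show (1:ℤ)+1 = 2 by norm_num, phi1] at h
  rw [h]
  funext i; fin_cases i <;>
    simp only [S, Matrix.mulVec, dotProduct, Fin.sum_univ_two, Matrix.of_apply,
      Matrix.cons_val', Matrix.cons_val_zero, Matrix.cons_val_one, Matrix.head_cons,
      Matrix.head_fin_const, Matrix.empty_val', Matrix.cons_val_fin_one, Fin.mk_zero, Fin.mk_one]
  · linear_combination trig2
  · linear_combination -trig1

private lemma phi3 : φ 3 = ![-(Real.sin (π/8) : ℂ), -(Real.cos (π/8) : ℂ)] := by
  have h := phi_step 2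
  rw [show (2:ℤ)+1 = 3 by norm_num, phi2] at h
  rw [h]
  funext i; fin_cases i <;>
    simp only [S, Matrix.mulVec, dotProduct, Fin.sum_univ_two, Matrix.of_apply,
      Matrix.cons_val', Matrix.cons_val_zero, Matrix.cons_val_one, Matrix.head_cons,
      Matrix.head_fin_const, Matrix.empty_val', Matrix.cons_val_fin_one, Fin.mk_zero, Fin.mk_one]
  · linear_combination -trig2
  · linear_combination -trig1

private lemma cos_sq8R : Real.cos (π/8) ^ 2 = 1/2 + Real.sqrt 2/4 := by
  have := Real.cos_sq (π/8)
  rw [show 2 * (π/8) = π/4 by ring, Real.cos_pi_div_four] at this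
  linarith

private lemma cos_sq8 : (Real.cos (π/8) : ℂ) * (Real.cos (π/8) : ℂ)
    = 1/2 + (Real.sqrt 2 : ℂ)/4 := by
  have hr : Real.cos (π/8) * Real.cos (π/8) = 1/2 + Real.sqrt 2/4 := by
    rw [← pow_two]; exact cos_sq8R
  rw [← Complex.ofReal_mul, hr]; push_cast; ring

private lemma sin_sq8 : (Real.sin (π/8) : ℂ) * (Real.sin (π/8) : ℂ)
    = 1/2 - (Real.sqrt 2 : ℂ)/4 := by
  have hr : Real.sin (π/8) * Real.sin (π/8) = 1/2 - Real.sqrt 2/4 := by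
    rw [← pow_two]
    have h1 := Real.sin_sq_add_cos_sq (π/8)
    have h2 := cos_sq8R
    linarith
  rw [← Complex.ofReal_mul, hr]; push_cast; ring

private lemma sincos8 : (Real.cos (π/8) : ℂ) * (Real.sin (π/8) : ℂ)
    = (Real.sqrt 2 : ℂ)/4 := by
  have hr : Real.cos (π/8) * Real.sin (π/8) = Real.sqrt 2/4 := by
    have := Real.sin_two_mul (π/8)
    rw [show 2 * (π/8) = π/4 by ring, Real.sin_pi_div_four] at this
    linarith
  rw [← Complex.ofReal_mul, hr]; push_cast; ring

private lemma psi0 : ψ 0 = fun p =>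
    !![1/2 + (Real.sqrt 2 : ℂ)/4, (Real.sqrt 2 : ℂ)/4;
       (Real.sqrt 2 : ℂ)/4, 1/2 - (Real.sqrt 2 : ℂ)/4] p.1 p.2 := by
  funext p
  obtain ⟨i, j⟩ := p
  simp only [ψ, tensor, phi0]
  fin_cases i <;> fin_cases j <;>
    simp only [Matrix.of_apply, Matrix.cons_val', Matrix.cons_val_zero, Matrix.cons_val_one,
      Matrix.head_cons, Matrix.head_fin_const, Matrix.empty_val', Matrix.cons_val_fin_one, Fin.mk_zero, Fin.mk_one]
  · linear_combination cos_sq8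
  · linear_combination sincos8
  · linear_combination sincos8
  · linear_combination sin_sq8

private lemma psi1 : ψ 1 = fun p =>
    !![1/2 + (Real.sqrt 2 : ℂ)/4, -((Real.sqrt 2 : ℂ)/4);
       -((Real.sqrt 2 : ℂ)/4), 1/2 - (Real.sqrt 2 : ℂ)/4] p.1 p.2 := by
  funext p
  obtain ⟨i, j⟩ := p
  simp only [ψ, tensor, phi1]
  fin_cases i <;> fin_cases j <;>
    simp only [Matrix.of_apply, Matrix.cons_val', Matrix.cons_val_zero, Matrix.cons_val_one,
      Matrix.head_cons, Matrix.head_fin_const, Matrix.empty_val', Matrix.cons_val_fin_one, Fin.mk_zero, Fin.mk_one]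
  · linear_combination cos_sq8
  · linear_combination -sincos8
  · linear_combination -sincos8
  · linear_combination sin_sq8

private lemma psi2 : ψ 2 = fun p =>
    !![1/2 - (Real.sqrt 2 : ℂ)/4, -((Real.sqrt 2 : ℂ)/4);
       -((Real.sqrt 2 : ℂ)/4), 1/2 + (Real.sqrt 2 : ℂ)/4] p.1 p.2 := by
  funext p
  obtain ⟨i, j⟩ := p
  simp only [ψ, tensor, phi2]
  fin_cases i <;> fin_cases j <;>
    simp only [Matrix.of_apply, Matrix.cons_val', Matrix.cons_val_zero, Matrix.cons_val_one,
      Matrix.head_cons, Matrix.head_fin_const, Matrix.empty_val', Matrix.cons_val_fin_one, Fin.mk_zero, Fin.mk_one]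
  · linear_combination sin_sq8
  · linear_combination -sincos8
  · linear_combination -sincos8
  · linear_combination cos_sq8

private lemma psi3 : ψ 3 = fun p =>
    !![1/2 - (Real.sqrt 2 : ℂ)/4, (Real.sqrt 2 : ℂ)/4;
       (Real.sqrt 2 : ℂ)/4, 1/2 + (Real.sqrt 2 : ℂ)/4] p.1 p.2 := by
  funext p
  obtain ⟨i, j⟩ := p
  simp only [ψ, tensor, phi3]
  fin_cases i <;> fin_cases j <;>
    simp only [Matrix.of_apply, Matrix.cons_val', Matrix.cons_val_zero, Matrix.cons_val_one,
      Matrix.head_cons, Matrix.head_fin_const, Matrix.empty_val', Matrix.cons_val_fin_one, Fin.mk_zero, Fin.mk_one]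
  · linear_combination sin_sq8
  · linear_combination sincos8
  · linear_combination sincos8
  · linear_combination cos_sq8

/-- The vector `u = (1,-1,-1,1)`. -/
private def uvec : Fin 2 × Fin 2 → ℂ := fun p => ![(1:ℂ), -1] p.1 * ![(1:ℂ), -1] p.2
/-- The vector `e₃ = (0,0,0,1)`. -/
private def evec : Fin 2 × Fin 2 → ℂ := fun p => ![(0:ℂ), 1] p.1 * ![(0:ℂ), 1] p.2

private lemma key_decomp :
    L2 - (((3 - Real.sqrt 2) / 7 : ℝ) : ℂ) • B2 =
      (((1 + 2*Real.sqrt 2)/28 : ℝ) : ℂ) • P4 uvec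
        + ((4*((1 + 2*Real.sqrt 2)/28) : ℝ) : ℂ) • P4 evec := by
  ext p q
  obtain ⟨i, j⟩ := p
  obtain ⟨k, l⟩ := q
  simp only [L2, B2, psi0, psi1, psi2, psi3, P4, uvec, evec, Matrix.sub_apply,
    Matrix.add_apply, Matrix.smul_apply, vecMulVec_apply, Pi.star_apply, smul_eq_mul]
  fin_cases i <;> fin_cases j <;> fin_cases k <;> fin_cases l <;>
    simp only [Fin.mk_zero, Fin.mk_one, Fin.isValue, Matrix.of_apply, Matrix.cons_val',
      Matrix.cons_val_zero, Matrix.cons_val_one, Matrix.head_cons, Matrix.head_fin_const,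
      Matrix.empty_val', Matrix.cons_val_fin_one] <;>
    simp only [Complex.star_def, map_add, map_sub, map_div₀, map_neg, map_ofNat,
      _root_.map_one, _root_.map_zero, Complex.conj_ofReal, _root_.map_mul]
  · push_cast; linear_combination ((-1/56) + (1/28) * (Real.sqrt 2 : ℂ)) * h2c
  · push_cast; linear_combination ((-1/56) + (0) * (Real.sqrt 2 : ℂ)) * h2c
  · push_cast; linear_combination ((-1/56) + (0) * (Real.sqrt 2 : ℂ)) * h2c
  · push_cast; linear_combination ((-1/56) + (-1/28) * (Real.sqrt 2 : ℂ)) * h2c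
  · push_cast; linear_combination ((-1/56) + (0) * (Real.sqrt 2 : ℂ)) * h2c
  · push_cast; linear_combination ((1/56) + (1/28) * (Real.sqrt 2 : ℂ)) * h2c
  · push_cast; linear_combination ((1/56) + (1/28) * (Real.sqrt 2 : ℂ)) * h2c
  · push_cast; linear_combination ((-1/56) + (0) * (Real.sqrt 2 : ℂ)) * h2c
  · push_cast; linear_combination ((-1/56) + (0) * (Real.sqrt 2 : ℂ)) * h2c
  · push_cast; linear_combination ((1/56) + (1/28) * (Real.sqrt 2 : ℂ)) * h2c
  · push_cast; linear_combination ((1/56) + (1/28) * (Real.sqrt 2 : ℂ)) * h2c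
  · push_cast; linear_combination ((-1/56) + (0) * (Real.sqrt 2 : ℂ)) * h2c
  · push_cast; linear_combination ((-1/56) + (-1/28) * (Real.sqrt 2 : ℂ)) * h2c
  · push_cast; linear_combination ((-1/56) + (0) * (Real.sqrt 2 : ℂ)) * h2c
  · push_cast; linear_combination ((-1/56) + (0) * (Real.sqrt 2 : ℂ)) * h2c
  · push_cast; linear_combination ((3/56) + (1/28) * (Real.sqrt 2 : ℂ)) * h2c

private lemma h2ne : (3/2 - 3/8 * (Real.sqrt 2 : ℂ)) ≠ 0 := by
  intro h
  have h4 : (Real.sqrt 2 : ℂ) = 4 := by linear_combination (-8/3 : ℂ) * h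
  have := h2c
  rw [h4] at this
  norm_num at this


/-- `L - ((3 - √2)/7) B` is positive semidefinite and the bound is attained:
the minimum bit error rate Eve induces in two-photon SARG04 by a POVM
intercept-and-resend attack resending SARG04 states is `(3 - √2)/7`. -/
theorem sarg04_two_photon_min_ber :
    (L2 - (((3 - Real.sqrt 2) / 7 : ℝ) : ℂ) • B2).PosSemidef ∧
    ∃ v : Fin 2 × Fin 2 → ℂ,
      (L2 - (((3 - Real.sqrt 2) / 7 : ℝ) : ℂ) • B2).mulVec v = 0 ∧ B2.mulVec v ≠ 0 := by
  have hd : (0:ℝ) ≤ (1 + 2*Real.sqrt 2)/28 := by positivity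
  constructor
  · rw [key_decomp]
    exact (smul_P4_posSemidef _ hd _).add (smul_P4_posSemidef _ (by positivity) _)
  · refine ⟨fun p => ![(1:ℂ), 0] p.1, ?_, ?_⟩
    · rw [key_decomp]
      funext p
      obtain ⟨i, j⟩ := p
      fin_cases i <;> fin_cases j <;>
        simp [Matrix.mulVec, dotProduct, Matrix.add_apply, Matrix.smul_apply, P4,
          uvec, evec, vecMulVec_apply, Fintype.sum_prod_type, Fin.sum_univ_two] <;>
        ring
    · intro hzero
      have hval : B2.mulVec (fun p => ![(1:ℂ), 0] p.1) (0, 0)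
          = 3/2 - 3/8 * (Real.sqrt 2 : ℂ) := by
        simp only [B2, psi0, psi1, psi2, psi3, P4, Matrix.mulVec, dotProduct,
          Matrix.add_apply, Matrix.smul_apply, vecMulVec_apply, Pi.star_apply,
          smul_eq_mul, Fintype.sum_prod_type, Fin.sum_univ_two]
        simp only [Matrix.cons_val', Matrix.cons_val_zero, Matrix.cons_val_one,
          Matrix.head_cons, Matrix.head_fin_const, Matrix.empty_val', Matrix.cons_val_fin_one,
          Fin.mk_zero, Fin.mk_one, Fin.isValue, Matrix.of_apply]
        simp only [Complex.star_def, map_add, map_sub, map_div₀, map_neg, map_ofNat,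
          _root_.map_one, _root_.map_zero, Complex.conj_ofReal, _root_.map_mul]
        push_cast
        ring_nf
        linear_combination ((1/4) + (0) * (Real.sqrt 2 : ℂ)) * h2c
      rw [hzero] at hval
      exact h2ne (by rw [← hval]; rfl)

end
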